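/- Let α > 2 and β > 0, let φ be an analytic self-map of the open unit disk D, and let g be analytic on D. Then the operator U_gC_φ, defined by (U_gC_φ f)(z) = ∫₀^z f(φ(ξ)) g'(ξ) dξ, is bounded from Z^α to Z^β if and only if sup_{z∈D} (1−|z|²)^β |g'(z)φ'(z)| / (1−|φ(z)|²)^{α−1} < ∞ and sup_{z∈D} (1−|z|²)^β |g''(z)| / (1−|φ(z)|²)^{α−2} < ∞. -/

import Mathlib

noncomputable section

/-- The open unit disk in the complex plane. -/
def uD : Set ℂ := Metric.ball 0 1

/-- The Zygmund-type quantity `(1-|z|^2)^a * |f''(z)|`. -/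
def zygS (a : ℝ) (f : ℂ → ℂ) (z : ℂ) : ℝ := (1 - ‖z‖ ^ 2) ^ a * ‖deriv (deriv f) z‖

/-- Membership in the Zygmund-type space `Z^a`. -/
def memZ (a : ℝ) (f : ℂ → ℂ) : Prop :=
  AnalyticOn ℂ f uD ∧ ∃ M : ℝ, ∀ z ∈ uD, zygS a f z ≤ M

/-- The Zygmund-type norm `‖f‖_{Z^a} = |f 0| + |f' 0| + sup_{z ∈ D} (1-|z|^2)^a |f''(z)|`. -/
def zNorm (a : ℝ) (f : ℂ → ℂ) : ℝ := ‖f 0‖ + ‖deriv f 0‖ + sSup (zygS a f '' uD)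

/-- Membership in the weighted space `H^∞_{v_b}` (for `u` analytic on `uD`). -/
def memHv (b : ℝ) (u : ℂ → ℂ) : Prop :=
  ∃ M : ℝ, ∀ z ∈ uD, (1 - ‖z‖ ^ 2) ^ b * ‖u z‖ ≤ M

/-- `T` is a bounded operator from `Z^a` to `Z^b`. -/
def boundedOp (a b : ℝ) (T : (ℂ → ℂ) → ℂ → ℂ) : Prop :=
  (∀ f, memZ a f → memZ b (T f)) ∧
    ∃ C > 0, ∀ f, memZ a f → zNorm b (T f) ≤ C * zNorm a f

/-- `(U_g C_φ f)(z) = ∫₀^z f(φ(ξ)) g'(ξ) dξ`, parametrized along the segment from `0` to `z`. -/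
def UgCphi (g φ : ℂ → ℂ) (f : ℂ → ℂ) : ℂ → ℂ :=
  fun z => ∫ t in (0:ℝ)..1, z * (f (φ ((t : ℂ) * z)) * deriv g ((t : ℂ) * z))


lemma uD_open : IsOpen uD := Metric.isOpen_ball
lemma mem_uD {z : ℂ} : z ∈ uD ↔ ‖z‖ < 1 := by
  simp [uD, Metric.mem_ball, dist_zero_right]
lemma zero_mem_uD : (0:ℂ) ∈ uD := by simp [mem_uD]

lemma smul_mem_uD {z : ℂ} (hz : z ∈ uD) {t : ℝ} (h0 : 0 ≤ t) (h1 : t ≤ 1) :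
    (t:ℂ) * z ∈ uD := by
  rw [mem_uD] at hz ⊢
  calc ‖(t:ℂ) * z‖ = |t| * ‖z‖ := by simp [norm_mul]
  _ ≤ 1 * ‖z‖ := by
      apply mul_le_mul_of_nonneg_right _ (norm_nonneg z)
      rw [abs_of_nonneg h0]; exact h1
  _ < 1 := by simpa using hz

/-- Key derivative lemma: derivative of the parametrized integral. -/
lemma hasDerivAt_param_int (h : ℂ → ℂ) (hh : DifferentiableOn ℂ h uD)
    {z₀ : ℂ} (hz : z₀ ∈ uD) :
    HasDerivAt (fun z => ∫ t in (0:ℝ)..1, z * h ((t:ℂ) * z)) (h z₀) z₀ := by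
  have hz1 : ‖z₀‖ < 1 := mem_uD.mp hz
  set r : ℝ := (1 + ‖z₀‖)/2 with hr
  have hr1 : r < 1 := by rw [hr]; linarith
  have hrz : ‖z₀‖ < r := by rw [hr]; linarith
  have hr0 : 0 ≤ r := by positivity
  set ε : ℝ := (1 - ‖z₀‖)/2 with hε
  have hε0 : 0 < ε := by rw [hε]; linarith
  have hball : Metric.ball z₀ ε ⊆ Metric.closedBall 0 r := by
    intro x hx
    simp only [Metric.mem_ball, Metric.mem_closedBall, dist_zero_right] at hx ⊢
    calc ‖x‖ ≤ ‖x - z₀‖ + ‖z₀‖ := by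
          simpa using norm_add_le (x - z₀) z₀
    _ ≤ ε + ‖z₀‖ := by
          rw [dist_eq_norm] at hx; linarith [hx.le]
    _ ≤ r := by rw [hε, hr]; linarith
  have hsub : Metric.closedBall (0:ℂ) r ⊆ uD := by
    intro x hx
    simp only [Metric.mem_closedBall, dist_zero_right] at hx
    exact mem_uD.mpr (lt_of_le_of_lt hx hr1)
  have htx : ∀ (t : ℝ), t ∈ Set.Icc (0:ℝ) 1 → ∀ x ∈ Metric.closedBall (0:ℂ) r,
      (t:ℂ) * x ∈ Metric.closedBall (0:ℂ) r := by
    intro t ht x hx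
    simp only [Metric.mem_closedBall, dist_zero_right] at hx ⊢
    calc ‖(t:ℂ) * x‖ = |t| * ‖x‖ := by simp [norm_mul]
    _ ≤ 1 * r := by
        apply mul_le_mul (by rw [abs_of_nonneg ht.1]; exact ht.2) hx (norm_nonneg x) zero_le_one
    _ = r := one_mul r
  -- continuity of h and deriv h on the closed ball
  have hana : AnalyticOnNhd ℂ h uD := hh.analyticOnNhd uD_open
  have hderiv_ana : AnalyticOnNhd ℂ (deriv h) uD := hana.deriv
  have hcont : ContinuousOn h (Metric.closedBall 0 r) := (hana.continuousOn).mono hsub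
  have hdcont : ContinuousOn (deriv h) (Metric.closedBall 0 r) :=
    (hderiv_ana.continuousOn).mono hsub
  obtain ⟨K₁, hK₁⟩ := (isCompact_closedBall (0:ℂ) r).exists_bound_of_continuousOn hcont
  obtain ⟨K₂, hK₂⟩ := (isCompact_closedBall (0:ℂ) r).exists_bound_of_continuousOn hdcont
  have hK₁0 : 0 ≤ K₁ := le_trans (norm_nonneg _) (hK₁ 0 (by simp [hr0]))
  have hK₂0 : 0 ≤ K₂ := le_trans (norm_nonneg _) (hK₂ 0 (by simp [hr0]))
  set K : ℝ := K₁ + K₂ with hK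
  -- the derivative of x ↦ x * h(tx) at any point x
  have hdF : ∀ (t : ℝ), t ∈ Set.Icc (0:ℝ) 1 → ∀ x ∈ uD,
      HasDerivAt (fun y => y * h ((t:ℂ) * y))
        (h ((t:ℂ)*x) + x * (deriv h ((t:ℂ)*x) * (t:ℂ))) x := by
    intro t ht x hx
    have hmem : (t:ℂ) * x ∈ uD := smul_mem_uD hx ht.1 ht.2
    have hdiff : DifferentiableAt ℂ h ((t:ℂ)*x) :=
      (hana ((t:ℂ)*x) hmem).differentiableAt
    have hinner : HasDerivAt (fun y : ℂ => (t:ℂ) * y) (t:ℂ) x := by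
      simpa using (hasDerivAt_id x).const_mul (t:ℂ)
    have hcomp : HasDerivAt (fun y : ℂ => h ((t:ℂ)*y)) (deriv h ((t:ℂ)*x) * (t:ℂ)) x :=
      (hdiff.hasDerivAt).comp x hinner
    simpa using (hasDerivAt_id x).fun_mul hcomp
  -- apply dominated differentiation
  have main := intervalIntegral.hasDerivAt_integral_of_dominated_loc_of_lip
    (F := fun x t => x * h ((t:ℂ) * x))
    (F' := fun t => h ((t:ℂ)*z₀) + z₀ * (deriv h ((t:ℂ)*z₀) * (t:ℂ)))
    (x₀ := z₀) (a := 0) (b := 1) (μ := MeasureTheory.volume) (bound := fun _ => K)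
    (Metric.ball_mem_nhds z₀ hε0) ?_ ?_ ?_ ?_ (intervalIntegrable_const) ?_
  · -- conclude: the integral of F' is h z₀
    rcases main with ⟨-, hd⟩
    have : (∫ t in (0:ℝ)..1, (h ((t:ℂ)*z₀) + z₀ * (deriv h ((t:ℂ)*z₀) * (t:ℂ)))) = h z₀ := by
      have hFTC : ∀ t ∈ Set.uIcc (0:ℝ) 1,
          HasDerivAt (fun s : ℝ => (s:ℂ) * h ((s:ℂ)*z₀))
            (h ((t:ℂ)*z₀) + z₀ * (deriv h ((t:ℂ)*z₀) * (t:ℂ))) t := by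
        intro t ht
        rw [Set.uIcc_of_le zero_le_one] at ht
        have : HasDerivAt (fun y : ℂ => y * h (y * z₀))
            (h ((t:ℂ)*z₀) + (t:ℂ) * (deriv h ((t:ℂ)*z₀) * z₀)) (t:ℂ) := by
          have hmem : (t:ℂ) * z₀ ∈ uD := smul_mem_uD hz ht.1 ht.2
          have hdiff : DifferentiableAt ℂ h ((t:ℂ)*z₀) := (hana _ hmem).differentiableAt
          have hinner : HasDerivAt (fun y : ℂ => y * z₀) z₀ (t:ℂ) := by
            simpa using (hasDerivAt_id (t:ℂ)).mul_const z₀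
          have hcomp : HasDerivAt (fun y : ℂ => h (y * z₀))
              (deriv h ((t:ℂ)*z₀) * z₀) (t:ℂ) := (hdiff.hasDerivAt).comp (t:ℂ) hinner
          simpa using (hasDerivAt_id (t:ℂ)).fun_mul hcomp
        have := this.comp_ofReal
        convert this using 1
        ring
      have hcont' : ContinuousOn
          (fun t : ℝ => h ((t:ℂ)*z₀) + z₀ * (deriv h ((t:ℂ)*z₀) * (t:ℂ)))
          (Set.uIcc (0:ℝ) 1) := by
        rw [Set.uIcc_of_le zero_le_one]
        have hmap : Set.MapsTo (fun t : ℝ => (t:ℂ)*z₀) (Set.Icc (0:ℝ) 1) uD := by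
          intro t ht; exact smul_mem_uD hz ht.1 ht.2
        have hc1 : ContinuousOn (fun t : ℝ => (t:ℂ)*z₀) (Set.Icc (0:ℝ) 1) := by
          fun_prop
        exact ((hana.continuousOn.comp hc1 hmap).add
          (continuousOn_const.mul ((hderiv_ana.continuousOn.comp hc1 hmap).mul
            (by fun_prop))))
      rw [intervalIntegral.integral_eq_sub_of_hasDerivAt hFTC
        hcont'.intervalIntegrable]
      simp
    rwa [this] at hd
  · -- measurability of F x
    filter_upwards [uD_open.mem_nhds hz] with x hx
    have hc : ContinuousOn (fun t : ℝ => x * h ((t:ℂ)*x)) (Set.Ioc 0 1) := by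
      apply continuousOn_const.mul
      apply hana.continuousOn.comp (by fun_prop)
      intro t ht
      exact smul_mem_uD hx ht.1.le ht.2
    rw [Set.uIoc_of_le (zero_le_one)]
    exact hc.aestronglyMeasurable measurableSet_Ioc
  · -- integrability of F z₀
    apply ContinuousOn.intervalIntegrable
    rw [Set.uIcc_of_le (zero_le_one)]
    apply continuousOn_const.mul
    apply hana.continuousOn.comp (by fun_prop)
    intro t ht
    exact smul_mem_uD hz ht.1 ht.2
  · -- measurability of F'
    have hmap : Set.MapsTo (fun t : ℝ => (t:ℂ)*z₀) (Set.Ioc (0:ℝ) 1) uD := by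
      intro t ht; exact smul_mem_uD hz ht.1.le ht.2
    have hc : ContinuousOn (fun t : ℝ => h ((t:ℂ)*z₀) + z₀ * (deriv h ((t:ℂ)*z₀) * (t:ℂ)))
        (Set.Ioc 0 1) :=
      (hana.continuousOn.comp (by fun_prop) hmap).add
        (continuousOn_const.mul ((hderiv_ana.continuousOn.comp (by fun_prop) hmap).mul
          (by fun_prop)))
    rw [Set.uIoc_of_le (zero_le_one)]
    exact hc.aestronglyMeasurable measurableSet_Ioc
  · -- Lipschitz estimate
    apply MeasureTheory.ae_of_all
    intro t ht
    rw [Set.uIoc_of_le (zero_le_one)] at ht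
    have htI : t ∈ Set.Icc (0:ℝ) 1 := ⟨ht.1.le, ht.2⟩
    apply Convex.lipschitzOnWith_of_nnnorm_hasDerivWithin_le
      (f' := fun x => h ((t:ℂ)*x) + x * (deriv h ((t:ℂ)*x) * (t:ℂ))) (convex_ball z₀ ε)
    · intro x hx
      exact (hdF t htI x (hsub (hball hx))).hasDerivWithinAt
    · intro x hx
      have hxcb : x ∈ Metric.closedBall (0:ℂ) r := hball hx
      have hxr : ‖x‖ ≤ r := by
        simpa [Metric.mem_closedBall, dist_zero_right] using hxcb
      have htxcb : (t:ℂ)*x ∈ Metric.closedBall (0:ℂ) r := htx t htI x hxcb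
      have h1 : ‖h ((t:ℂ)*x)‖ ≤ K₁ := hK₁ _ htxcb
      have h2 : ‖deriv h ((t:ℂ)*x)‖ ≤ K₂ := hK₂ _ htxcb
      have : ‖h ((t:ℂ)*x) + x * (deriv h ((t:ℂ)*x) * (t:ℂ))‖ ≤ K := by
        calc ‖h ((t:ℂ)*x) + x * (deriv h ((t:ℂ)*x) * (t:ℂ))‖
            ≤ ‖h ((t:ℂ)*x)‖ + ‖x‖ * (‖deriv h ((t:ℂ)*x)‖ * ‖(t:ℂ)‖) := by
              refine le_trans (norm_add_le _ _) ?_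
              gcongr
              simp [norm_mul]
        _ ≤ K₁ + 1 * (K₂ * 1) := by
              gcongr
              · exact le_trans hxr hr1.le
              · simpa [Complex.norm_real] using abs_le.mpr ⟨by linarith [htI.1], htI.2⟩
        _ = K := by rw [hK]; ring
      rw [← NNReal.coe_le_coe]
      simpa using le_trans this (le_abs_self K)
  · -- differentiability at z₀
    apply MeasureTheory.ae_of_all
    intro t ht
    rw [Set.uIoc_of_le (zero_le_one)] at ht
    exact hdF t ⟨ht.1.le, ht.2⟩ z₀ hz

/-- Generic growth estimate. -/
lemma growth_gen (u : ℂ → ℂ) (hu : DifferentiableOn ℂ u uD) (γ K : ℝ) (hγ : 1 < γ)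
    (hK : 0 ≤ K) (hb : ∀ z ∈ uD, ‖deriv u z‖ ≤ K * (1 - ‖z‖) ^ (-γ)) :
    ∀ w ∈ uD, ‖u w‖ ≤ ‖u 0‖ + K/(γ-1) * (1 - ‖w‖) ^ (1-γ) := by
  intro w hw
  have hw1 : ‖w‖ < 1 := mem_uD.mp hw
  set r := ‖w‖ with hrdef
  have hr0 : 0 ≤ r := norm_nonneg w
  have hana : AnalyticOnNhd ℂ u uD := hu.analyticOnNhd uD_open
  have hmapIcc : ∀ t ∈ Set.Icc (0:ℝ) 1, (t:ℂ) * w ∈ uD := fun t ht =>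
    smul_mem_uD hw ht.1 ht.2
  have hnorm_tw : ∀ t ∈ Set.Icc (0:ℝ) 1, ‖(t:ℂ) * w‖ = t * r := by
    intro t ht
    rw [norm_mul, Complex.norm_real, Real.norm_eq_abs, abs_of_nonneg ht.1]
  -- FTC: u w - u 0 = ∫₀¹ deriv u (t w) * w dt
  have hFTC : ∀ t ∈ Set.uIcc (0:ℝ) 1,
      HasDerivAt (fun s : ℝ => u ((s:ℂ) * w)) (deriv u ((t:ℂ)*w) * w) t := by
    intro t ht
    rw [Set.uIcc_of_le zero_le_one] at ht
    have hmem := hmapIcc t ht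
    have hinner : HasDerivAt (fun y : ℂ => y * w) w (t:ℂ) := by
      simpa using (hasDerivAt_id (t:ℂ)).mul_const w
    exact (((hana _ hmem).differentiableAt.hasDerivAt).comp (t:ℂ) hinner).comp_ofReal
  have hcont0 : ContinuousOn (fun t : ℝ => deriv u ((t:ℂ)*w) * w) (Set.Icc 0 1) := by
    apply ContinuousOn.mul _ continuousOn_const
    exact (hana.deriv.continuousOn).comp (by fun_prop) (fun t ht => hmapIcc t ht)
  have hint : (∫ t in (0:ℝ)..1, deriv u ((t:ℂ)*w) * w) = u w - u 0 := by
    rw [intervalIntegral.integral_eq_sub_of_hasDerivAt hFTC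
      (by rw [intervalIntegrable_iff_integrableOn_Icc_of_le zero_le_one]
          exact hcont0.integrableOn_compact isCompact_Icc)]
    simp
  -- the scalar bound function
  set gbd : ℝ → ℝ := fun t => K * (1 - t*r) ^ (-γ) * r with hgbd
  have hpos : ∀ t ∈ Set.Icc (0:ℝ) 1, 0 < 1 - t * r := by
    intro t ht
    nlinarith [ht.1, ht.2, hr0]
  have hgc : ContinuousOn gbd (Set.Icc 0 1) := by
    apply ContinuousOn.mul _ continuousOn_const
    apply continuousOn_const.mul
    apply ContinuousOn.rpow_const (by fun_prop)
    intro t ht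
    exact Or.inl (ne_of_gt (hpos t ht))
  have hgint : IntervalIntegrable gbd MeasureTheory.volume 0 1 := by
    rw [intervalIntegrable_iff_integrableOn_Icc_of_le zero_le_one]
    exact hgc.integrableOn_compact isCompact_Icc
  have hbound : ∀ᵐ (t : ℝ) ∂((MeasureTheory.volume : MeasureTheory.Measure ℝ).restrict (Set.uIoc (0:ℝ) 1)),
      ‖deriv u ((t:ℂ)*w) * w‖ ≤ gbd t := by
    rw [MeasureTheory.ae_restrict_iff' measurableSet_uIoc]
    apply MeasureTheory.ae_of_all
    intro t ht
    rw [Set.uIoc_of_le zero_le_one] at ht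
    have htI : t ∈ Set.Icc (0:ℝ) 1 := ⟨ht.1.le, ht.2⟩
    have h1 : ‖deriv u ((t:ℂ)*w)‖ ≤ K * (1 - t*r) ^ (-γ) := by
      have := hb _ (hmapIcc t htI)
      rwa [hnorm_tw t htI] at this
    calc ‖deriv u ((t:ℂ)*w) * w‖ = ‖deriv u ((t:ℂ)*w)‖ * r := by rw [norm_mul]
    _ ≤ K * (1 - t*r) ^ (-γ) * r := by
        apply mul_le_mul_of_nonneg_right h1 hr0
  -- compute the integral of gbd
  have hganti : ∀ t ∈ Set.uIcc (0:ℝ) 1,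
      HasDerivAt (fun t : ℝ => K/(γ-1) * (1 - t*r) ^ (1-γ)) (gbd t) t := by
    intro t ht
    rw [Set.uIcc_of_le zero_le_one] at ht
    have hne : (1 - t*r) ≠ 0 := ne_of_gt (hpos t ht)
    have hin : HasDerivAt (fun t : ℝ => 1 - t*r) (-r) t := by
      simpa using ((hasDerivAt_id t).mul_const r).const_sub 1
    have hd := (hin.rpow_const (p := 1-γ) (Or.inl hne)).const_mul (K/(γ-1))
    have hγne : γ - 1 ≠ 0 := by intro hc; linarith [hγ]
    have heq : (1 - t*r) ^ (1 - γ - 1) = (1 - t*r) ^ (-γ) := by norm_num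
    refine hd.congr_deriv ?_
    symm
    rw [hgbd, heq]
    field_simp
    ring
  have hgval : (∫ t in (0:ℝ)..1, gbd t) =
      K/(γ-1) * (1 - r) ^ (1-γ) - K/(γ-1) := by
    rw [intervalIntegral.integral_eq_sub_of_hasDerivAt hganti hgint]
    norm_num
  have hKg : 0 ≤ K/(γ-1) := div_nonneg hK (by linarith)
  have hrp : (0:ℝ) ≤ (1 - r) ^ (1-γ) := Real.rpow_nonneg (by linarith) _
  have hfinal : ‖u w - u 0‖ ≤ K/(γ-1) * (1 - r) ^ (1-γ) := by
    rw [← hint]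
    refine le_trans (intervalIntegral.norm_integral_le_abs_of_norm_le hbound hgint) ?_
    have h1le : 1 ≤ (1 - r) ^ (1-γ) :=
      Real.one_le_rpow_of_pos_of_le_one_of_nonpos (by linarith) (by linarith) (by linarith)
    rw [hgval, abs_of_nonneg (by nlinarith)]
    nlinarith
  calc ‖u w‖ = ‖u 0 + (u w - u 0)‖ := by ring_nf
  _ ≤ ‖u 0‖ + ‖u w - u 0‖ := norm_add_le _ _
  _ ≤ ‖u 0‖ + K/(γ-1) * (1 - r) ^ (1-γ) := by linarith

lemma one_sub_sq_pos {z : ℂ} (hz : z ∈ uD) : 0 < 1 - ‖z‖^2 := by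
  have := mem_uD.mp hz
  nlinarith [norm_nonneg z]

lemma one_sub_pos {z : ℂ} (hz : z ∈ uD) : 0 < 1 - ‖z‖ := by
  have := mem_uD.mp hz; linarith

lemma zygS_nonneg (a : ℝ) (f : ℂ → ℂ) {z : ℂ} (hz : z ∈ uD) : 0 ≤ zygS a f z :=
  mul_nonneg (Real.rpow_nonneg (one_sub_sq_pos hz).le _) (norm_nonneg _)

/-- `S f := sSup` term of the norm. -/
lemma zyg_le_sSup (a : ℝ) (f : ℂ → ℂ) (hf : memZ a f) {z : ℂ} (hz : z ∈ uD) :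
    zygS a f z ≤ sSup (zygS a f '' uD) := by
  obtain ⟨M, hM⟩ := hf.2
  exact le_csSup ⟨M, by rintro x ⟨w, hw, rfl⟩; exact hM w hw⟩ ⟨z, hz, rfl⟩

lemma sSup_zyg_nonneg (a : ℝ) (f : ℂ → ℂ) (hf : memZ a f) :
    0 ≤ sSup (zygS a f '' uD) :=
  le_trans (zygS_nonneg a f zero_mem_uD) (zyg_le_sSup a f hf zero_mem_uD)

lemma sSup_le_zNorm (a : ℝ) (f : ℂ → ℂ) : sSup (zygS a f '' uD) ≤ zNorm a f := by
  unfold zNorm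
  linarith [norm_nonneg (f 0), norm_nonneg (deriv f 0)]

lemma zNorm_nonneg (a : ℝ) (f : ℂ → ℂ) (hf : memZ a f) : 0 ≤ zNorm a f := by
  unfold zNorm
  linarith [norm_nonneg (f 0), norm_nonneg (deriv f 0), sSup_zyg_nonneg a f hf]

lemma norm_f0_le (a : ℝ) (f : ℂ → ℂ) (hf : memZ a f) : ‖f 0‖ ≤ zNorm a f := by
  unfold zNorm
  linarith [norm_nonneg (deriv f 0), sSup_zyg_nonneg a f hf]

lemma norm_df0_le (a : ℝ) (f : ℂ → ℂ) (hf : memZ a f) : ‖deriv f 0‖ ≤ zNorm a f := by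
  unfold zNorm
  linarith [norm_nonneg (f 0), sSup_zyg_nonneg a f hf]

/-- second derivative pointwise bound -/
lemma deriv2_bound (a : ℝ) (ha : 0 ≤ a) (f : ℂ → ℂ) (hf : memZ a f) {z : ℂ} (hz : z ∈ uD) :
    ‖deriv (deriv f) z‖ ≤ sSup (zygS a f '' uD) * (1 - ‖z‖) ^ (-a) := by
  have h2 := one_sub_sq_pos hz
  have h1 := one_sub_pos hz
  have hS := zyg_le_sSup a f hf hz
  unfold zygS at hS
  have hp : (0:ℝ) < (1 - ‖z‖^2) ^ a := Real.rpow_pos_of_pos h2 a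
  have hstep : ‖deriv (deriv f) z‖ ≤ sSup (zygS a f '' uD) * (1 - ‖z‖^2) ^ (-a) := by
    calc ‖deriv (deriv f) z‖
        = ((1 - ‖z‖^2) ^ a * ‖deriv (deriv f) z‖) / (1 - ‖z‖^2) ^ a := by
          exact (mul_div_cancel_left₀ _ hp.ne').symm
    _ ≤ sSup (zygS a f '' uD) / (1 - ‖z‖^2) ^ a := by
          gcongr
          exact hS
    _ = sSup (zygS a f '' uD) * (1 - ‖z‖^2) ^ (-a) := by
          rw [Real.rpow_neg h2.le, div_eq_mul_inv]
  refine le_trans hstep ?_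
  apply mul_le_mul_of_nonneg_left _ (sSup_zyg_nonneg a f hf)
  exact Real.rpow_le_rpow_of_nonpos h1 (by nlinarith [norm_nonneg z]) (by linarith)

/-- growth of the first derivative (in terms of `1 - ‖w‖`) -/
lemma growth_deriv' (α : ℝ) (hα : 2 < α) (f : ℂ → ℂ) (hf : memZ α f) :
    ∀ w ∈ uD, ‖deriv f w‖ ≤ (‖deriv f 0‖ + sSup (zygS α f '' uD)/(α-1)) * (1 - ‖w‖) ^ (1-α) := by
  have hd : DifferentiableOn ℂ (deriv f) uD :=
    (((uD_open.analyticOn_iff_analyticOnNhd).mp hf.1).deriv).differentiableOn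
  have key := growth_gen (deriv f) hd α (sSup (zygS α f '' uD)) (by linarith)
    (sSup_zyg_nonneg α f hf) (fun z hz => deriv2_bound α (by linarith) f hf hz)
  intro w hw
  have h1 := one_sub_pos hw
  have hone : (1:ℝ) ≤ (1 - ‖w‖) ^ (1-α) :=
    Real.one_le_rpow_of_pos_of_le_one_of_nonpos h1 (by nlinarith [norm_nonneg w]) (by linarith)
  calc ‖deriv f w‖ ≤ ‖deriv f 0‖ + sSup (zygS α f '' uD)/(α-1) * (1 - ‖w‖) ^ (1-α) :=
        key w hw
  _ ≤ (‖deriv f 0‖ + sSup (zygS α f '' uD)/(α-1)) * (1 - ‖w‖) ^ (1-α) := by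
      rw [add_mul]
      have := norm_nonneg (deriv f 0)
      nlinarith

lemma growth_val' (α : ℝ) (hα : 2 < α) (f : ℂ → ℂ) (hf : memZ α f) :
    ∀ w ∈ uD, ‖f w‖ ≤ ‖f 0‖ +
      ((‖deriv f 0‖ + sSup (zygS α f '' uD)/(α-1))/(α-2)) * (1 - ‖w‖) ^ (2-α) := by
  set K := ‖deriv f 0‖ + sSup (zygS α f '' uD)/(α-1) with hKdef
  have hK0 : 0 ≤ K := by
    have h1 := sSup_zyg_nonneg α f hf
    have h2 := norm_nonneg (deriv f 0)
    have h3 : 0 ≤ sSup (zygS α f '' uD)/(α-1) := div_nonneg h1 (by linarith)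
    rw [hKdef]; linarith
  have hd : DifferentiableOn ℂ f uD :=
    ((uD_open.analyticOn_iff_analyticOnNhd).mp hf.1).differentiableOn
  have key := growth_gen f hd (α-1) K (by linarith) hK0 ?_
  · intro w hw
    have := key w hw
    have he1 : (1:ℝ)-(α-1) = 2-α := by ring
    have he2 : α-1-1 = α-2 := by ring
    rw [he1, he2] at this
    exact this
  · intro z hz
    have := growth_deriv' α hα f hf z hz
    have he : (1:ℝ)-α = -(α-1) := by ring
    rwa [he] at this

lemma half_le {w : ℂ} (hw : w ∈ uD) : (1 - ‖w‖^2)/2 ≤ 1 - ‖w‖ := by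
  have := mem_uD.mp hw
  nlinarith [norm_nonneg w]

lemma rpow_conv (p : ℝ) (hp : 0 ≤ p) {w : ℂ} (hw : w ∈ uD) :
    (1-‖w‖) ^ (-p) ≤ 2^p * (1-‖w‖^2) ^ (-p) := by
  have h2 := one_sub_sq_pos hw
  have h1 := one_sub_pos hw
  calc (1-‖w‖) ^ (-p) ≤ ((1-‖w‖^2)/2) ^ (-p) :=
        Real.rpow_le_rpow_of_nonpos (by linarith) (half_le hw) (by linarith)
  _ = (1-‖w‖^2) ^ (-p) / 2 ^ (-p) := Real.div_rpow h2.le (by norm_num) (-p)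
  _ = 2^p * (1-‖w‖^2) ^ (-p) := by
      rw [Real.rpow_neg (by norm_num : (0:ℝ) ≤ 2)]
      field_simp

lemma one_le_rpow_uD (p : ℝ) (hp : 0 ≤ p) {w : ℂ} (hw : w ∈ uD) :
    (1:ℝ) ≤ (1-‖w‖^2) ^ (-p) := by
  have h2 := one_sub_sq_pos hw
  exact Real.one_le_rpow_of_pos_of_le_one_of_nonpos h2 (by nlinarith [norm_nonneg w]) (by linarith)

/-- Final form: growth of the derivative in terms of `1-‖w‖²` and `zNorm`. -/
lemma growth_deriv (α : ℝ) (hα : 2 < α) (f : ℂ → ℂ) (hf : memZ α f) {w : ℂ} (hw : w ∈ uD) :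
    ‖deriv f w‖ ≤ (2:ℝ)^(α-1) * (1 + 1/(α-1)) * zNorm α f * (1-‖w‖^2) ^ (1-α) := by
  have h0 := growth_deriv' α hα f hf w hw
  have hZ := zNorm_nonneg α f hf
  have hKle : ‖deriv f 0‖ + sSup (zygS α f '' uD)/(α-1) ≤ (1 + 1/(α-1)) * zNorm α f := by
    have h1 := norm_df0_le α f hf
    have h2 := sSup_le_zNorm α f
    have hα1 : (0:ℝ) < α-1 := by linarith
    have h3 : sSup (zygS α f '' uD)/(α-1) ≤ zNorm α f/(α-1) := by gcongr
    rw [add_mul, one_mul]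
    have : zNorm α f/(α-1) = 1/(α-1) * zNorm α f := by ring
    linarith [this ▸ h3]
  have hconv : (1-‖w‖) ^ (1-α) ≤ 2^(α-1) * (1-‖w‖^2) ^ (1-α) := by
    have := rpow_conv (α-1) (by linarith) hw
    have he : -(α-1) = 1-α := by ring
    rwa [he] at this
  have hK0 : (0:ℝ) ≤ ‖deriv f 0‖ + sSup (zygS α f '' uD)/(α-1) := by
    have h5 := sSup_zyg_nonneg α f hf
    have h4 : 0 ≤ sSup (zygS α f '' uD)/(α-1) := div_nonneg h5 (by linarith)
    linarith [norm_nonneg (deriv f 0)]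
  have hrp : (0:ℝ) ≤ (1-‖w‖) ^ (1-α) := Real.rpow_nonneg (one_sub_pos hw).le _
  calc ‖deriv f w‖ ≤ (‖deriv f 0‖ + sSup (zygS α f '' uD)/(α-1)) * (1-‖w‖) ^ (1-α) := h0
  _ ≤ ((1 + 1/(α-1)) * zNorm α f) * (2^(α-1) * (1-‖w‖^2) ^ (1-α)) := by
      apply mul_le_mul hKle hconv hrp
      have h6 : (0:ℝ) ≤ 1/(α-1) := by
        apply div_nonneg <;> linarith
      have := zNorm_nonneg α f hf
      nlinarith
  _ = (2:ℝ)^(α-1) * (1 + 1/(α-1)) * zNorm α f * (1-‖w‖^2) ^ (1-α) := by ring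

/-- Final form: growth of the value in terms of `1-‖w‖²` and `zNorm`. -/
lemma growth_val (α : ℝ) (hα : 2 < α) (f : ℂ → ℂ) (hf : memZ α f) {w : ℂ} (hw : w ∈ uD) :
    ‖f w‖ ≤ (2:ℝ)^(α-2) * (1 + (1 + 1/(α-1))/(α-2)) * zNorm α f * (1-‖w‖^2) ^ (2-α) := by
  have h0 := growth_val' α hα f hf w hw
  have hZ := zNorm_nonneg α f hf
  have hKle : ‖deriv f 0‖ + sSup (zygS α f '' uD)/(α-1) ≤ (1 + 1/(α-1)) * zNorm α f := by
    have h1 := norm_df0_le α f hf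
    have h2 := sSup_le_zNorm α f
    have hα1 : (0:ℝ) < α-1 := by linarith
    have h3 : sSup (zygS α f '' uD)/(α-1) ≤ zNorm α f/(α-1) := by gcongr
    rw [add_mul, one_mul]
    have : zNorm α f/(α-1) = 1/(α-1) * zNorm α f := by ring
    linarith [this ▸ h3]
  have hconv : (1-‖w‖) ^ (2-α) ≤ 2^(α-2) * (1-‖w‖^2) ^ (2-α) := by
    have := rpow_conv (α-2) (by linarith) hw
    have he : -(α-2) = 2-α := by ring
    rwa [he] at this
  have hone : (1:ℝ) ≤ (1-‖w‖^2) ^ (2-α) := by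
    have := one_le_rpow_uD (α-2) (by linarith) hw
    have he : -(α-2) = 2-α := by ring
    rwa [he] at this
  have h2α : (1:ℝ) ≤ (2:ℝ)^(α-2) := Real.one_le_rpow (by norm_num) (by linarith)
  have hf0 : ‖f 0‖ ≤ 2^(α-2) * zNorm α f * (1-‖w‖^2) ^ (2-α) := by
    calc ‖f 0‖ ≤ zNorm α f := norm_f0_le α f hf
    _ = 1 * zNorm α f * 1 := by ring
    _ ≤ 2^(α-2) * zNorm α f * (1-‖w‖^2) ^ (2-α) := by
        apply mul_le_mul (mul_le_mul h2α le_rfl hZ (by linarith)) hone (by norm_num)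
        positivity
  have hrp : (0:ℝ) ≤ (1-‖w‖) ^ (2-α) := Real.rpow_nonneg (one_sub_pos hw).le _
  have hK0 : (0:ℝ) ≤ ‖deriv f 0‖ + sSup (zygS α f '' uD)/(α-1) := by
    have h5 := sSup_zyg_nonneg α f hf
    have h4 : 0 ≤ sSup (zygS α f '' uD)/(α-1) := div_nonneg h5 (by linarith)
    linarith [norm_nonneg (deriv f 0)]
  have hmain : (‖deriv f 0‖ + sSup (zygS α f '' uD)/(α-1))/(α-2) * (1-‖w‖) ^ (2-α)
      ≤ ((1 + 1/(α-1)) * zNorm α f)/(α-2) * (2^(α-2) * (1-‖w‖^2) ^ (2-α)) := by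
    have hα2 : (0:ℝ) < α-2 := by linarith
    apply mul_le_mul _ hconv hrp
    · apply div_nonneg _ (by linarith : (0:ℝ) ≤ α - 2)
      have h6 : (0:ℝ) ≤ 1/(α-1) := by apply div_nonneg <;> linarith
      nlinarith
    · gcongr
  calc ‖f w‖ ≤ ‖f 0‖ + (‖deriv f 0‖ + sSup (zygS α f '' uD)/(α-1))/(α-2) * (1-‖w‖) ^ (2-α) := h0
  _ ≤ 2^(α-2) * zNorm α f * (1-‖w‖^2) ^ (2-α)
      + ((1 + 1/(α-1)) * zNorm α f)/(α-2) * (2^(α-2) * (1-‖w‖^2) ^ (2-α)) := by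
      linarith [hf0, hmain]
  _ = (2:ℝ)^(α-2) * (1 + (1 + 1/(α-1))/(α-2)) * zNorm α f * (1-‖w‖^2) ^ (2-α) := by ring

section test
variable (α c : ℝ) (a : ℂ)

def wfun (a z : ℂ) : ℂ := 1 - (starRingEnd ℂ a) * z
def testF : ℂ → ℂ := fun z =>
  (((1-‖a‖^2) ^ c : ℝ) : ℂ) * (wfun a z) ^ (((2 - α - c : ℝ)) : ℂ)
def testD1 : ℂ → ℂ := fun z =>
  (((1-‖a‖^2) ^ c : ℝ) : ℂ) * ((α+c-2 : ℝ) : ℂ) * (starRingEnd ℂ a)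
    * (wfun a z) ^ (((1 - α - c : ℝ)) : ℂ)
def testD2 : ℂ → ℂ := fun z =>
  (((1-‖a‖^2) ^ c : ℝ) : ℂ) * ((α+c-2 : ℝ) : ℂ) * ((α+c-1 : ℝ) : ℂ)
    * (starRingEnd ℂ a)^2 * (wfun a z) ^ (((-α - c : ℝ)) : ℂ)

variable {a}

lemma norm_conj_mul {z : ℂ} : ‖(starRingEnd ℂ a) * z‖ = ‖a‖ * ‖z‖ := by
  rw [norm_mul, RCLike.norm_conj]

lemma wfun_re (ha : a ∈ uD) {z : ℂ} (hz : z ∈ uD) : 0 < (wfun a z).re := by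
  have h1 : ‖(starRingEnd ℂ a) * z‖ < 1 := by
    rw [norm_conj_mul]
    have ha' := mem_uD.mp ha
    have hz' := mem_uD.mp hz
    nlinarith [norm_nonneg a, norm_nonneg z]
  have h2 : ((starRingEnd ℂ a) * z).re ≤ ‖(starRingEnd ℂ a) * z‖ := Complex.re_le_norm _
  simp only [wfun, Complex.sub_re, Complex.one_re]
  linarith
lemma wfun_slit (ha : a ∈ uD) {z : ℂ} (hz : z ∈ uD) : wfun a z ∈ Complex.slitPlane :=
  Or.inl (wfun_re ha hz)
lemma wfun_ne (ha : a ∈ uD) {z : ℂ} (hz : z ∈ uD) : wfun a z ≠ 0 :=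
  Complex.slitPlane_ne_zero (wfun_slit ha hz)
lemma wfun_norm_ge_z (ha : a ∈ uD) {z : ℂ} (hz : z ∈ uD) : 1 - ‖z‖ ≤ ‖wfun a z‖ := by
  have h1 : ‖(1:ℂ)‖ - ‖(starRingEnd ℂ a) * z‖ ≤ ‖wfun a z‖ := norm_sub_norm_le _ _
  rw [norm_one, norm_conj_mul] at h1
  have ha' := mem_uD.mp ha
  nlinarith [norm_nonneg z, norm_nonneg a]
lemma wfun_norm_ge_a (ha : a ∈ uD) {z : ℂ} (hz : z ∈ uD) : 1 - ‖a‖ ≤ ‖wfun a z‖ := by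
  have h1 : ‖(1:ℂ)‖ - ‖(starRingEnd ℂ a) * z‖ ≤ ‖wfun a z‖ := norm_sub_norm_le _ _
  rw [norm_one, norm_conj_mul] at h1
  have hz' := mem_uD.mp hz
  nlinarith [norm_nonneg z, norm_nonneg a]
lemma wfun_norm_pos (ha : a ∈ uD) {z : ℂ} (hz : z ∈ uD) : 0 < ‖wfun a z‖ :=
  norm_pos_iff.mpr (wfun_ne ha hz)

lemma wfun_hasDeriv (z : ℂ) : HasDerivAt (wfun a) (-(starRingEnd ℂ a)) z := by
  show HasDerivAt (fun x => 1 - starRingEnd ℂ a * x) _ z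
  simpa using ((hasDerivAt_id z).const_mul (starRingEnd ℂ a)).const_sub 1

lemma test_d1 (ha : a ∈ uD) {z : ℂ} (hz : z ∈ uD) :
    HasDerivAt (testF α c a) (testD1 α c a z) z := by
  have h := (wfun_hasDeriv (a := a) z).cpow_const (c := (((2 - α - c : ℝ)) : ℂ))
    (wfun_slit ha hz)
  have h2 := h.const_mul (((1-‖a‖^2) ^ c : ℝ) : ℂ)
  refine h2.congr_deriv ?_
  symm
  unfold testD1
  have he : (((2 - α - c : ℝ)) : ℂ) - 1 = (((1 - α - c : ℝ)) : ℂ) := by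
    push_cast; ring
  rw [← he]
  push_cast
  ring

lemma test_d2 (ha : a ∈ uD) {z : ℂ} (hz : z ∈ uD) :
    HasDerivAt (testD1 α c a) (testD2 α c a z) z := by
  have h := (wfun_hasDeriv (a := a) z).cpow_const (c := (((1 - α - c : ℝ)) : ℂ))
    (wfun_slit ha hz)
  have h2 := h.const_mul ((((1-‖a‖^2) ^ c : ℝ) : ℂ) * ((α+c-2 : ℝ) : ℂ) * (starRingEnd ℂ a))
  refine h2.congr_deriv ?_
  symm
  unfold testD2
  have he : (((1 - α - c : ℝ)) : ℂ) - 1 = (((- α - c : ℝ)) : ℂ) := by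
    push_cast; ring
  rw [← he]
  push_cast
  ring

lemma norm_wpow (p : ℝ) {z : ℂ} : ‖(wfun a z) ^ ((p : ℝ) : ℂ)‖ = ‖wfun a z‖ ^ p := by
  rw [Complex.norm_cpow_real]

/-- bound on `zygS` of the test function (for `0 ≤ c`). -/
lemma test_zyg_bound (hα : 2 < α) (hc : 0 ≤ c) (ha : a ∈ uD) {z : ℂ} (hz : z ∈ uD) :
    (1-‖z‖^2) ^ α * ‖testD2 α c a z‖ ≤ (α+c-2)*(α+c-1)*2^(α+c) := by
  have hwpos := wfun_norm_pos ha hz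
  have h2z := one_sub_sq_pos hz
  have h2a := one_sub_sq_pos ha
  have hz1 : 1 - ‖z‖^2 ≤ 2 * ‖wfun a z‖ := by
    have := wfun_norm_ge_z ha hz
    nlinarith [norm_nonneg z]
  have ha1 : 1 - ‖a‖^2 ≤ 2 * ‖wfun a z‖ := by
    have := wfun_norm_ge_a ha hz
    nlinarith [norm_nonneg a]
  have hnorm : ‖testD2 α c a z‖
      = (1-‖a‖^2)^c * (α+c-2) * (α+c-1) * ‖a‖^2 * ‖wfun a z‖ ^ (-α-c) := by
    unfold testD2
    rw [norm_mul, norm_mul, norm_mul, norm_mul, norm_wpow]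
    rw [Complex.norm_real, Complex.norm_real, Complex.norm_real]
    rw [Real.norm_eq_abs, Real.norm_eq_abs, Real.norm_eq_abs]
    rw [abs_of_nonneg (Real.rpow_nonneg h2a.le c), abs_of_nonneg (by linarith : (0:ℝ) ≤ α+c-2),
      abs_of_nonneg (by linarith : (0:ℝ) ≤ α+c-1)]
    rw [norm_pow, RCLike.norm_conj]
  rw [hnorm]
  have key : (1-‖z‖^2) ^ α * ((1-‖a‖^2)^c * ‖wfun a z‖ ^ (-α-c))
      ≤ 2^(α+c) := by
    have e1 : (1-‖z‖^2) ^ α ≤ 2^α * ‖wfun a z‖ ^ α := by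
      calc (1-‖z‖^2) ^ α ≤ (2 * ‖wfun a z‖) ^ α :=
            Real.rpow_le_rpow h2z.le hz1 (by linarith)
      _ = 2^α * ‖wfun a z‖ ^ α := Real.mul_rpow (by norm_num) hwpos.le
    have e2 : (1-‖a‖^2) ^ c ≤ 2^c * ‖wfun a z‖ ^ c := by
      calc (1-‖a‖^2) ^ c ≤ (2 * ‖wfun a z‖) ^ c :=
            Real.rpow_le_rpow h2a.le ha1 hc
      _ = 2^c * ‖wfun a z‖ ^ c := Real.mul_rpow (by norm_num) hwpos.le
    have e3 : (0:ℝ) ≤ ‖wfun a z‖ ^ (-α-c) := Real.rpow_nonneg hwpos.le _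
    calc (1-‖z‖^2) ^ α * ((1-‖a‖^2)^c * ‖wfun a z‖ ^ (-α-c))
        ≤ (2^α * ‖wfun a z‖ ^ α) * ((2^c * ‖wfun a z‖ ^ c) * ‖wfun a z‖ ^ (-α-c)) := by
          apply mul_le_mul e1 _ _ (by positivity)
          · apply mul_le_mul_of_nonneg_right e2 e3
          · positivity
    _ = 2^(α+c) * (‖wfun a z‖ ^ α * ‖wfun a z‖ ^ c * ‖wfun a z‖ ^ (-α-c)) := by
          rw [Real.rpow_add (by norm_num : (0:ℝ) < 2)]
          ring
    _ = 2^(α+c) := by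
          rw [← Real.rpow_add hwpos, ← Real.rpow_add hwpos]
          norm_num
  have ha2 : ‖a‖^2 ≤ 1 := by
    have := mem_uD.mp ha
    nlinarith [norm_nonneg a]
  calc (1-‖z‖^2) ^ α * ((1-‖a‖^2)^c * (α+c-2) * (α+c-1) * ‖a‖^2 * ‖wfun a z‖ ^ (-α-c))
      = ((α+c-2)*(α+c-1)) * ((1-‖z‖^2) ^ α * ((1-‖a‖^2)^c * ‖wfun a z‖ ^ (-α-c))) * ‖a‖^2 := by
        ring
  _ ≤ ((α+c-2)*(α+c-1)) * 2^(α+c) * 1 := by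
        apply mul_le_mul _ ha2 (by positivity)
          (mul_nonneg (mul_nonneg (by linarith) (by linarith))
            (Real.rpow_nonneg (by norm_num) _))
        apply mul_le_mul_of_nonneg_left key (by nlinarith)
  _ = (α+c-2)*(α+c-1)*2^(α+c) := by ring

lemma wfun_self (a : ℂ) : wfun a a = (((1-‖a‖^2) : ℝ) : ℂ) := by
  unfold wfun
  rw [mul_comm, Complex.mul_conj']
  norm_cast

lemma cpow_self (ha : a ∈ uD) (p : ℝ) :
    (wfun a a) ^ ((p : ℝ) : ℂ) = (((1-‖a‖^2) ^ p : ℝ) : ℂ) := by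
  rw [wfun_self, Complex.ofReal_cpow (one_sub_sq_pos ha).le]

lemma test_val (ha : a ∈ uD) :
    testF α c a a = (((1-‖a‖^2) ^ (2-α) : ℝ) : ℂ) := by
  unfold testF
  rw [cpow_self ha]
  rw [← Complex.ofReal_mul, ← Real.rpow_add (one_sub_sq_pos ha)]
  norm_num

lemma test_d1_val (ha : a ∈ uD) :
    testD1 α c a a = ((α+c-2 : ℝ) : ℂ) * (starRingEnd ℂ a) * (((1-‖a‖^2) ^ (1-α) : ℝ) : ℂ) := by
  unfold testD1
  rw [cpow_self ha]
  have hr : ((1-‖a‖^2) ^ c) * ((1-‖a‖^2) ^ (1-α-c)) = (1-‖a‖^2) ^ (1-α) := by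
    rw [← Real.rpow_add (one_sub_sq_pos ha)]
    congr 1
    ring
  rw [← hr, Complex.ofReal_mul]
  ring

lemma test_val0 (hα : 2 < α) (hc : 0 ≤ c) (ha : a ∈ uD) : ‖testF α c a 0‖ ≤ 1 := by
  unfold testF wfun
  have h2a := one_sub_sq_pos ha
  have ha2 : (1-‖a‖^2) ≤ 1 := by nlinarith [norm_nonneg a, sq_nonneg (‖a‖)]
  rw [mul_zero, sub_zero, Complex.one_cpow, mul_one, Complex.norm_real,
    Real.norm_eq_abs, abs_of_nonneg (Real.rpow_nonneg h2a.le c)]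
  exact Real.rpow_le_one h2a.le ha2 hc

lemma test_d1_val0 (hα : 2 < α) (hc : 0 ≤ c) (ha : a ∈ uD) :
    ‖testD1 α c a 0‖ ≤ α + c - 2 := by
  unfold testD1 wfun
  have h2a := one_sub_sq_pos ha
  have ha2 : (1-‖a‖^2) ≤ 1 := by nlinarith [norm_nonneg a, sq_nonneg (‖a‖)]
  rw [mul_zero, sub_zero, Complex.one_cpow, mul_one]
  rw [norm_mul, norm_mul, Complex.norm_real, Complex.norm_real, RCLike.norm_conj,
    Real.norm_eq_abs, Real.norm_eq_abs,
    abs_of_nonneg (Real.rpow_nonneg h2a.le c), abs_of_nonneg (by linarith : (0:ℝ) ≤ α+c-2)]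
  have h1 : (1-‖a‖^2) ^ c ≤ 1 := Real.rpow_le_one h2a.le ha2 hc
  have h2 : ‖a‖ ≤ 1 := (mem_uD.mp ha).le
  have h3 : (1-‖a‖^2) ^ c * ‖a‖ ≤ 1 :=
    mul_le_one₀ h1 (norm_nonneg a) h2
  calc (1-‖a‖^2) ^ c * (α+c-2) * ‖a‖ = (α+c-2) * ((1-‖a‖^2) ^ c * ‖a‖) := by ring
  _ ≤ (α+c-2) * 1 := by
      apply mul_le_mul_of_nonneg_left h3 (by linarith)
  _ = α+c-2 := mul_one _

end test

/-- generic second-derivative identification -/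
lemma deriv_eq_on {f f1 : ℂ → ℂ} (h1 : ∀ z ∈ uD, HasDerivAt f (f1 z) z) {z : ℂ}
    (hz : z ∈ uD) : deriv f z = f1 z := (h1 z hz).deriv

lemma deriv2_eq {f f1 f2 : ℂ → ℂ} (h1 : ∀ z ∈ uD, HasDerivAt f (f1 z) z)
    (h2 : ∀ z ∈ uD, HasDerivAt f1 (f2 z) z) {z : ℂ} (hz : z ∈ uD) :
    deriv (deriv f) z = f2 z := by
  have hev : deriv f =ᶠ[nhds z] f1 := by
    filter_upwards [uD_open.mem_nhds hz] with w hw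
    exact (h1 w hw).deriv
  rw [hev.deriv_eq, (h2 z hz).deriv]

lemma zNorm_le {b A B E : ℝ} {f : ℂ → ℂ} (hA : ‖f 0‖ ≤ A) (hB : ‖deriv f 0‖ ≤ B)
    (hE : ∀ z ∈ uD, zygS b f z ≤ E) : zNorm b f ≤ A + B + E := by
  unfold zNorm
  have hsup : sSup (zygS b f '' uD) ≤ E := by
    refine csSup_le ⟨zygS b f 0, ⟨0, zero_mem_uD, rfl⟩⟩ ?_
    rintro x ⟨w, hw, rfl⟩
    exact hE w hw
  linarith

section comb
variable (α : ℝ) (μ ν a : ℂ)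

def comb : ℂ → ℂ := fun z => μ * testF α 1 a z + ν * testF α 2 a z
def combD1 : ℂ → ℂ := fun z => μ * testD1 α 1 a z + ν * testD1 α 2 a z
def combD2 : ℂ → ℂ := fun z => μ * testD2 α 1 a z + ν * testD2 α 2 a z
def KK : ℝ := 1 + α + α*(α+1)*2^(α+2)

variable {a}

lemma comb_d1 (ha : a ∈ uD) : ∀ z ∈ uD, HasDerivAt (comb α μ ν a) (combD1 α μ ν a z) z :=
  fun z hz => ((test_d1 α 1 ha hz).const_mul μ).add ((test_d1 α 2 ha hz).const_mul ν)

lemma comb_d2 (ha : a ∈ uD) : ∀ z ∈ uD, HasDerivAt (combD1 α μ ν a) (combD2 α μ ν a z) z :=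
  fun z hz => ((test_d2 α 1 ha hz).const_mul μ).add ((test_d2 α 2 ha hz).const_mul ν)

lemma comb_deriv2 (ha : a ∈ uD) {z : ℂ} (hz : z ∈ uD) :
    deriv (deriv (comb α μ ν a)) z = combD2 α μ ν a z :=
  deriv2_eq (comb_d1 α μ ν ha) (comb_d2 α μ ν ha) hz

lemma KK_pos (hα : 2 < α) : 0 < KK α := by
  unfold KK
  have h2 : (0:ℝ) < 2^(α+2) := Real.rpow_pos_of_pos (by norm_num) _
  have h3 : (0:ℝ) < α*(α+1)*2^(α+2) :=
    mul_pos (mul_pos (by linarith) (by linarith)) h2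
  linarith

lemma comb_zyg (hα : 2 < α) (ha : a ∈ uD) {z : ℂ} (hz : z ∈ uD) :
    zygS α (comb α μ ν a) z ≤ (‖μ‖ + ‖ν‖) * KK α := by
  unfold zygS
  rw [comb_deriv2 α μ ν ha hz]
  have h2z := one_sub_sq_pos hz
  have hp : (0:ℝ) ≤ (1-‖z‖^2) ^ α := Real.rpow_nonneg h2z.le _
  have hb1 := test_zyg_bound α 1 hα (by norm_num) ha hz
  have hb2 := test_zyg_bound α 2 hα (by norm_num) ha hz
  have h2exp : (0:ℝ) < 2^(α+2) := Real.rpow_pos_of_pos (by norm_num) _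
  have hm1 : (2:ℝ)^(α+(1:ℝ)) ≤ 2^(α+2) :=
    Real.rpow_le_rpow_of_exponent_le (by norm_num) (by linarith)
  have hm2 : (2:ℝ)^(α+(2:ℝ)) ≤ 2^(α+2) := le_of_eq rfl
  have hX1 : (α+1-2)*(α+1-1)*2^(α+(1:ℝ)) ≤ KK α := by
    unfold KK
    have e1 : (0:ℝ) ≤ (α+1-2)*(α+1-1) := by nlinarith
    have := mul_le_mul_of_nonneg_left hm1 e1
    nlinarith [Real.rpow_nonneg (show (0:ℝ) ≤ 2 by norm_num) (α+2)]
  have hX2 : (α+2-2)*(α+2-1)*2^(α+(2:ℝ)) ≤ KK α := by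
    unfold KK
    nlinarith [Real.rpow_nonneg (show (0:ℝ) ≤ 2 by norm_num) (α+2)]
  calc (1-‖z‖^2) ^ α * ‖μ * testD2 α 1 a z + ν * testD2 α 2 a z‖
      ≤ (1-‖z‖^2) ^ α * (‖μ‖ * ‖testD2 α 1 a z‖ + ‖ν‖ * ‖testD2 α 2 a z‖) := by
        apply mul_le_mul_of_nonneg_left _ hp
        refine le_trans (norm_add_le _ _) ?_
        rw [norm_mul, norm_mul]
  _ = ‖μ‖ * ((1-‖z‖^2) ^ α * ‖testD2 α 1 a z‖)
        + ‖ν‖ * ((1-‖z‖^2) ^ α * ‖testD2 α 2 a z‖) := by ring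
  _ ≤ ‖μ‖ * KK α + ‖ν‖ * KK α := by
        apply add_le_add
        · exact mul_le_mul_of_nonneg_left (le_trans hb1 hX1) (norm_nonneg μ)
        · exact mul_le_mul_of_nonneg_left (le_trans hb2 hX2) (norm_nonneg ν)
  _ = (‖μ‖ + ‖ν‖) * KK α := by ring

lemma comb_memZ (hα : 2 < α) (ha : a ∈ uD) : memZ α (comb α μ ν a) := by
  constructor
  · apply (DifferentiableOn.analyticOnNhd _ uD_open).analyticOn
    intro z hz
    exact ((comb_d1 α μ ν ha z hz).differentiableAt).differentiableWithinAt
  · exact ⟨(‖μ‖ + ‖ν‖) * KK α, fun z hz => comb_zyg α μ ν hα ha hz⟩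

lemma comb_zNorm (hα : 2 < α) (ha : a ∈ uD) :
    zNorm α (comb α μ ν a) ≤ 3 * (‖μ‖ + ‖ν‖) * KK α := by
  have hKK := KK_pos α hα
  have hA : ‖comb α μ ν a 0‖ ≤ (‖μ‖ + ‖ν‖) * KK α := by
    unfold comb
    refine le_trans (norm_add_le _ _) ?_
    rw [norm_mul, norm_mul]
    have h1 := test_val0 α 1 hα (by norm_num) ha
    have h2 := test_val0 α 2 hα (by norm_num) ha
    have hKK1 : (1:ℝ) ≤ KK α := by
      unfold KK
      have h2 : (0:ℝ) < 2^(α+2) := Real.rpow_pos_of_pos (by norm_num) _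
      have h3 : (0:ℝ) < α*(α+1)*2^(α+2) :=
        mul_pos (mul_pos (by linarith) (by linarith)) h2
      linarith
    have e1 : ‖μ‖ * ‖testF α 1 a 0‖ ≤ ‖μ‖ * KK α := by
      apply mul_le_mul_of_nonneg_left _ (norm_nonneg μ)
      linarith
    have e2 : ‖ν‖ * ‖testF α 2 a 0‖ ≤ ‖ν‖ * KK α := by
      apply mul_le_mul_of_nonneg_left _ (norm_nonneg ν)
      linarith
    nlinarith
  have hB : ‖deriv (comb α μ ν a) 0‖ ≤ (‖μ‖ + ‖ν‖) * KK α := by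
    rw [deriv_eq_on (comb_d1 α μ ν ha) zero_mem_uD]
    unfold combD1
    refine le_trans (norm_add_le _ _) ?_
    rw [norm_mul, norm_mul]
    have h1 := test_d1_val0 α 1 hα (by norm_num) ha
    have h2 := test_d1_val0 α 2 hα (by norm_num) ha
    have hKK1 : α ≤ KK α := by
      unfold KK
      have h2 : (0:ℝ) < 2^(α+2) := Real.rpow_pos_of_pos (by norm_num) _
      have h3 : (0:ℝ) < α*(α+1)*2^(α+2) :=
        mul_pos (mul_pos (by linarith) (by linarith)) h2
      linarith
    have e1 : ‖μ‖ * ‖testD1 α 1 a 0‖ ≤ ‖μ‖ * KK α := by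
      apply mul_le_mul_of_nonneg_left _ (norm_nonneg μ)
      linarith
    have e2 : ‖ν‖ * ‖testD1 α 2 a 0‖ ≤ ‖ν‖ * KK α := by
      apply mul_le_mul_of_nonneg_left _ (norm_nonneg ν)
      linarith
    nlinarith
  have := zNorm_le hA hB (fun z hz => comb_zyg α μ ν hα ha hz)
  calc zNorm α (comb α μ ν a) ≤ (‖μ‖ + ‖ν‖) * KK α + (‖μ‖ + ‖ν‖) * KK α
      + (‖μ‖ + ‖ν‖) * KK α := this
  _ = 3 * (‖μ‖ + ‖ν‖) * KK α := by ring

lemma comb_val (ha : a ∈ uD) :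
    comb α μ ν a a = (μ + ν) * (((1-‖a‖^2) ^ (2-α) : ℝ) : ℂ) := by
  unfold comb
  rw [test_val α 1 ha, test_val α 2 ha]
  ring

lemma comb_d1_val (ha : a ∈ uD) :
    deriv (comb α μ ν a) a = (μ * ((α-1 : ℝ) : ℂ) + ν * ((α : ℝ) : ℂ)) * (starRingEnd ℂ a)
      * (((1-‖a‖^2) ^ (1-α) : ℝ) : ℂ) := by
  rw [deriv_eq_on (comb_d1 α μ ν ha) ha]
  unfold combD1
  rw [test_d1_val α 1 ha, test_d1_val α 2 ha]
  have e1 : ((α+1-2 : ℝ) : ℂ) = ((α-1 : ℝ) : ℂ) := by push_cast; ring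
  have e2 : ((α+2-2 : ℝ) : ℂ) = ((α : ℝ) : ℂ) := by push_cast; ring
  rw [e1, e2]
  ring

end comb

section Tbasic
variable {φ g f : ℂ → ℂ}

lemma hmain_diff (hφ : AnalyticOn ℂ φ uD) (hφm : Set.MapsTo φ uD uD)
    (hg : AnalyticOn ℂ g uD) (hf : AnalyticOn ℂ f uD) :
    DifferentiableOn ℂ (fun w => f (φ w) * deriv g w) uD := by
  have hφ' := (uD_open.analyticOn_iff_analyticOnNhd).mp hφ
  have hg' := (uD_open.analyticOn_iff_analyticOnNhd).mp hg
  have hf' := (uD_open.analyticOn_iff_analyticOnNhd).mp hf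
  exact ((hf'.differentiableOn.comp hφ'.differentiableOn hφm).mul
    hg'.deriv.differentiableOn)

lemma T_hasDerivAt (hφ : AnalyticOn ℂ φ uD) (hφm : Set.MapsTo φ uD uD)
    (hg : AnalyticOn ℂ g uD) (hf : AnalyticOn ℂ f uD) {z : ℂ} (hz : z ∈ uD) :
    HasDerivAt (UgCphi g φ f) (f (φ z) * deriv g z) z := by
  have := hasDerivAt_param_int (fun w => f (φ w) * deriv g w)
    (hmain_diff hφ hφm hg hf) hz
  exact this

lemma T_diffOn (hφ : AnalyticOn ℂ φ uD) (hφm : Set.MapsTo φ uD uD)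
    (hg : AnalyticOn ℂ g uD) (hf : AnalyticOn ℂ f uD) :
    DifferentiableOn ℂ (UgCphi g φ f) uD := fun z hz =>
  ((T_hasDerivAt hφ hφm hg hf hz).differentiableAt).differentiableWithinAt

lemma T_analyticOn (hφ : AnalyticOn ℂ φ uD) (hφm : Set.MapsTo φ uD uD)
    (hg : AnalyticOn ℂ g uD) (hf : AnalyticOn ℂ f uD) :
    AnalyticOn ℂ (UgCphi g φ f) uD :=
  ((T_diffOn hφ hφm hg hf).analyticOnNhd uD_open).analyticOn

lemma T_deriv_eq (hφ : AnalyticOn ℂ φ uD) (hφm : Set.MapsTo φ uD uD)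
    (hg : AnalyticOn ℂ g uD) (hf : AnalyticOn ℂ f uD) {z : ℂ} (hz : z ∈ uD) :
    deriv (UgCphi g φ f) z = f (φ z) * deriv g z :=
  (T_hasDerivAt hφ hφm hg hf hz).deriv

lemma T_zero : UgCphi g φ f 0 = 0 := by
  simp [UgCphi]

lemma T_deriv2 (hφ : AnalyticOn ℂ φ uD) (hφm : Set.MapsTo φ uD uD)
    (hg : AnalyticOn ℂ g uD) (hf : AnalyticOn ℂ f uD) {z : ℂ} (hz : z ∈ uD) :
    deriv (deriv (UgCphi g φ f)) z
      = deriv f (φ z) * deriv φ z * deriv g z + f (φ z) * deriv (deriv g) z := by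
  have hφ' := (uD_open.analyticOn_iff_analyticOnNhd).mp hφ
  have hg' := (uD_open.analyticOn_iff_analyticOnNhd).mp hg
  have hf' := (uD_open.analyticOn_iff_analyticOnNhd).mp hf
  have hev : deriv (UgCphi g φ f) =ᶠ[nhds z] (fun w => f (φ w) * deriv g w) := by
    filter_upwards [uD_open.mem_nhds hz] with w hw
    exact T_deriv_eq hφ hφm hg hf hw
  rw [hev.deriv_eq]
  have h1 : HasDerivAt (fun w => f (φ w)) (deriv f (φ z) * deriv φ z) z :=
    ((hf' _ (hφm hz)).differentiableAt.hasDerivAt).comp z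
      ((hφ' _ hz).differentiableAt.hasDerivAt)
  have h2 : HasDerivAt (deriv g) (deriv (deriv g) z) z :=
    ((hg'.deriv) _ hz).differentiableAt.hasDerivAt
  exact (h1.mul h2).deriv

end Tbasic



/-! ### constant and identity test functions -/

lemma const_deriv2 : deriv (deriv (fun _ : ℂ => (1:ℂ))) = fun _ => 0 := by
  rw [deriv_const']
  funext x
  simp

lemma id_deriv2 : deriv (deriv (fun w : ℂ => w)) = fun _ => 0 := by
  rw [deriv_id'']
  funext x
  simp

lemma const_memZ (b : ℝ) : memZ b (fun _ : ℂ => (1:ℂ)) := by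
  refine ⟨analyticOn_const, 0, fun z hz => ?_⟩
  unfold zygS
  rw [const_deriv2]
  simp

lemma id_memZ (b : ℝ) : memZ b (fun w : ℂ => w) := by
  refine ⟨(analyticOnNhd_id).analyticOn, 0, fun z hz => ?_⟩
  unfold zygS
  rw [id_deriv2]
  simp

lemma zyg_zero_sSup (b : ℝ) {f : ℂ → ℂ} (h : deriv (deriv f) = fun _ => 0) :
    sSup (zygS b f '' uD) = 0 := by
  have hz : zygS b f = fun _ => 0 := by
    funext z
    unfold zygS
    rw [h]
    simp
  rw [hz, Set.Nonempty.image_const ⟨0, zero_mem_uD⟩ 0]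
  exact csSup_singleton 0

lemma const_zNorm (b : ℝ) : zNorm b (fun _ : ℂ => (1:ℂ)) = 1 := by
  unfold zNorm
  rw [zyg_zero_sSup b const_deriv2, deriv_const']
  simp

lemma id_zNorm (b : ℝ) : zNorm b (fun w : ℂ => w) = 1 := by
  unfold zNorm
  rw [zyg_zero_sSup b id_deriv2, deriv_id'']
  simp

lemma div_rpow_le_iff {x A p M : ℝ} (hx : 0 < x) :
    A / x ^ p ≤ M ↔ A ≤ M * x ^ p :=
  div_le_iff₀ (Real.rpow_pos_of_pos hx p)

lemma rpow_mul_rpow_neg {x p : ℝ} (hx : 0 < x) : x ^ p * x ^ (-p) = 1 := by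
  rw [← Real.rpow_add hx]
  simp

/-! ### The backward direction -/

lemma backward_dir (α β : ℝ) (hα : 2 < α) (hβ : 0 < β)
    (φ g : ℂ → ℂ) (hφ : AnalyticOn ℂ φ uD) (hφm : Set.MapsTo φ uD uD)
    (hg : AnalyticOn ℂ g uD)
    (h1 : ∃ M : ℝ, ∀ z ∈ uD,
      (1 - ‖z‖ ^ 2) ^ β * ‖deriv g z * deriv φ z‖ / (1 - ‖φ z‖ ^ 2) ^ (α - 1) ≤ M)
    (h2 : ∃ M : ℝ, ∀ z ∈ uD,
      (1 - ‖z‖ ^ 2) ^ β * ‖deriv (deriv g) z‖ / (1 - ‖φ z‖ ^ 2) ^ (α - 2) ≤ M) :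
    boundedOp α β (UgCphi g φ) := by
  obtain ⟨M₁, hM₁⟩ := h1
  obtain ⟨M₂, hM₂⟩ := h2
  have hM₁0 : 0 ≤ M₁ := by
    refine le_trans ?_ (hM₁ 0 zero_mem_uD)
    apply div_nonneg (mul_nonneg (Real.rpow_nonneg (one_sub_sq_pos zero_mem_uD).le _)
      (norm_nonneg _)) (Real.rpow_nonneg (one_sub_sq_pos (hφm zero_mem_uD)).le _)
  have hM₂0 : 0 ≤ M₂ := by
    refine le_trans ?_ (hM₂ 0 zero_mem_uD)
    apply div_nonneg (mul_nonneg (Real.rpow_nonneg (one_sub_sq_pos zero_mem_uD).le _)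
      (norm_nonneg _)) (Real.rpow_nonneg (one_sub_sq_pos (hφm zero_mem_uD)).le _)
  set Cd : ℝ := (2:ℝ)^(α-1) * (1 + 1/(α-1)) with hCddef
  set Cv : ℝ := (2:ℝ)^(α-2) * (1 + (1 + 1/(α-1))/(α-2)) with hCvdef
  have hCd0 : 0 ≤ Cd := by
    have e1 : (0:ℝ) < 1/(α-1) := by
      apply div_pos <;> linarith
    have e2 : (0:ℝ) ≤ (2:ℝ)^(α-1) := Real.rpow_nonneg (by norm_num) _
    apply mul_nonneg e2 (by linarith)
  have hCv0 : 0 ≤ Cv := by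
    have e1 : (0:ℝ) < 1/(α-1) := by
      apply div_pos <;> linarith
    have e1' : (0:ℝ) < (1 + 1/(α-1))/(α-2) := by
      apply div_pos <;> linarith
    have e2 : (0:ℝ) ≤ (2:ℝ)^(α-2) := Real.rpow_nonneg (by norm_num) _
    apply mul_nonneg e2 (by linarith)
  -- the pointwise estimate
  have hpoint : ∀ f, memZ α f → ∀ z ∈ uD,
      zygS β (UgCphi g φ f) z ≤ (M₁*Cd + M₂*Cv) * zNorm α f := by
    intro f hf z hz
    have ha : φ z ∈ uD := hφm hz
    have hx : 0 < 1 - ‖φ z‖^2 := one_sub_sq_pos ha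
    have hZ0 := zNorm_nonneg α f hf
    unfold zygS
    rw [T_deriv2 hφ hφm hg hf.1 hz]
    have hb := one_sub_sq_pos hz
    have hbp : (0:ℝ) ≤ (1 - ‖z‖^2) ^ β := Real.rpow_nonneg hb.le _
    have hA1 : (1 - ‖z‖ ^ 2) ^ β * ‖deriv g z * deriv φ z‖
        ≤ M₁ * (1 - ‖φ z‖ ^ 2) ^ (α - 1) := (div_rpow_le_iff hx).mp (hM₁ z hz)
    have hA2 : (1 - ‖z‖ ^ 2) ^ β * ‖deriv (deriv g) z‖
        ≤ M₂ * (1 - ‖φ z‖ ^ 2) ^ (α - 2) := (div_rpow_le_iff hx).mp (hM₂ z hz)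
    have hG1 : ‖deriv f (φ z)‖ ≤ Cd * zNorm α f * (1 - ‖φ z‖^2) ^ (1-α) :=
      growth_deriv α hα f hf ha
    have hG2 : ‖f (φ z)‖ ≤ Cv * zNorm α f * (1 - ‖φ z‖^2) ^ (2-α) :=
      growth_val α hα f hf ha
    have hterm1 : (1 - ‖z‖^2) ^ β * ‖deriv f (φ z) * deriv φ z * deriv g z‖
        ≤ M₁ * Cd * zNorm α f := by
      have e1 : (1 - ‖z‖^2) ^ β * ‖deriv f (φ z) * deriv φ z * deriv g z‖
          = ((1 - ‖z‖ ^ 2) ^ β * ‖deriv g z * deriv φ z‖) * ‖deriv f (φ z)‖ := by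
        rw [norm_mul, norm_mul, norm_mul]
        ring
      rw [e1]
      calc ((1 - ‖z‖ ^ 2) ^ β * ‖deriv g z * deriv φ z‖) * ‖deriv f (φ z)‖
          ≤ (M₁ * (1 - ‖φ z‖ ^ 2) ^ (α - 1)) * (Cd * zNorm α f * (1 - ‖φ z‖^2) ^ (1-α)) := by
            apply mul_le_mul hA1 hG1 (norm_nonneg _)
            apply mul_nonneg hM₁0 (Real.rpow_nonneg hx.le _)
      _ = M₁ * Cd * zNorm α f * ((1 - ‖φ z‖ ^ 2) ^ (α-1) * (1 - ‖φ z‖^2) ^ (-(α-1))) := by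
            have e : (1:ℝ) - α = -(α-1) := by ring
            rw [e]
            ring
      _ = M₁ * Cd * zNorm α f := by rw [rpow_mul_rpow_neg hx, mul_one]
    have hterm2 : (1 - ‖z‖^2) ^ β * ‖f (φ z) * deriv (deriv g) z‖
        ≤ M₂ * Cv * zNorm α f := by
      have e1 : (1 - ‖z‖^2) ^ β * ‖f (φ z) * deriv (deriv g) z‖
          = ((1 - ‖z‖ ^ 2) ^ β * ‖deriv (deriv g) z‖) * ‖f (φ z)‖ := by
        rw [norm_mul]
        ring
      rw [e1]
      calc ((1 - ‖z‖ ^ 2) ^ β * ‖deriv (deriv g) z‖) * ‖f (φ z)‖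
          ≤ (M₂ * (1 - ‖φ z‖ ^ 2) ^ (α - 2)) * (Cv * zNorm α f * (1 - ‖φ z‖^2) ^ (2-α)) := by
            apply mul_le_mul hA2 hG2 (norm_nonneg _)
            apply mul_nonneg hM₂0 (Real.rpow_nonneg hx.le _)
      _ = M₂ * Cv * zNorm α f * ((1 - ‖φ z‖ ^ 2) ^ (α-2) * (1 - ‖φ z‖^2) ^ (-(α-2))) := by
            have e : (2:ℝ) - α = -(α-2) := by ring
            rw [e]
            ring
      _ = M₂ * Cv * zNorm α f := by rw [rpow_mul_rpow_neg hx, mul_one]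
    calc (1 - ‖z‖^2) ^ β * ‖deriv f (φ z) * deriv φ z * deriv g z
          + f (φ z) * deriv (deriv g) z‖
        ≤ (1 - ‖z‖^2) ^ β * (‖deriv f (φ z) * deriv φ z * deriv g z‖
          + ‖f (φ z) * deriv (deriv g) z‖) :=
          mul_le_mul_of_nonneg_left (norm_add_le _ _) hbp
    _ = (1 - ‖z‖^2) ^ β * ‖deriv f (φ z) * deriv φ z * deriv g z‖
          + (1 - ‖z‖^2) ^ β * ‖f (φ z) * deriv (deriv g) z‖ := by ring
    _ ≤ M₁ * Cd * zNorm α f + M₂ * Cv * zNorm α f := add_le_add hterm1 hterm2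
    _ = (M₁*Cd + M₂*Cv) * zNorm α f := by ring
  constructor
  · intro f hf
    exact ⟨T_analyticOn hφ hφm hg hf.1, (M₁*Cd + M₂*Cv) * zNorm α f, hpoint f hf⟩
  · set c₀ : ℝ := Cv * (1 - ‖φ 0‖^2) ^ (2-α) * ‖deriv g 0‖ with hc₀def
    have hc₀0 : 0 ≤ c₀ := by
      apply mul_nonneg (mul_nonneg hCv0 (Real.rpow_nonneg (one_sub_sq_pos (hφm zero_mem_uD)).le _))
        (norm_nonneg _)
    refine ⟨c₀ + (M₁*Cd + M₂*Cv) + 1, by nlinarith [mul_nonneg hM₁0 hCd0, mul_nonneg hM₂0 hCv0], ?_⟩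
    intro f hf
    have hZ0 := zNorm_nonneg α f hf
    have hA : ‖UgCphi g φ f 0‖ ≤ 0 := by
      rw [T_zero]
      simp
    have hB : ‖deriv (UgCphi g φ f) 0‖ ≤ c₀ * zNorm α f := by
      rw [T_deriv_eq hφ hφm hg hf.1 zero_mem_uD, norm_mul]
      have hG2 : ‖f (φ 0)‖ ≤ Cv * zNorm α f * (1 - ‖φ 0‖^2) ^ (2-α) :=
        growth_val α hα f hf (hφm zero_mem_uD)
      calc ‖f (φ 0)‖ * ‖deriv g 0‖
          ≤ (Cv * zNorm α f * (1 - ‖φ 0‖^2) ^ (2-α)) * ‖deriv g 0‖ :=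
            mul_le_mul_of_nonneg_right hG2 (norm_nonneg _)
      _ = c₀ * zNorm α f := by rw [hc₀def]; ring
    have := zNorm_le hA hB (hpoint f hf)
    calc zNorm β (UgCphi g φ f) ≤ 0 + c₀ * zNorm α f + (M₁*Cd + M₂*Cv) * zNorm α f := this
    _ ≤ (c₀ + (M₁*Cd + M₂*Cv) + 1) * zNorm α f := by nlinarith


/-! ### The forward direction -/

lemma forward_dir (α β : ℝ) (hα : 2 < α) (hβ : 0 < β)
    (φ g : ℂ → ℂ) (hφ : AnalyticOn ℂ φ uD) (hφm : Set.MapsTo φ uD uD)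
    (hg : AnalyticOn ℂ g uD) (hbo : boundedOp α β (UgCphi g φ)) :
    (∃ M : ℝ, ∀ z ∈ uD,
      (1 - ‖z‖ ^ 2) ^ β * ‖deriv g z * deriv φ z‖ / (1 - ‖φ z‖ ^ 2) ^ (α - 1) ≤ M) ∧
    (∃ M : ℝ, ∀ z ∈ uD,
      (1 - ‖z‖ ^ 2) ^ β * ‖deriv (deriv g) z‖ / (1 - ‖φ z‖ ^ 2) ^ (α - 2) ≤ M) := by
  obtain ⟨hmap, C, hC0, hbnd⟩ := hbo
  have hkey : ∀ f, memZ α f → ∀ z ∈ uD, zygS β (UgCphi g φ f) z ≤ C * zNorm α f := by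
    intro f hf z hz
    exact le_trans (zyg_le_sSup β _ (hmap f hf) hz)
      (le_trans (sSup_le_zNorm β _) (hbnd f hf))
  -- bound for g'' from the constant test function
  have hN2 : ∀ z ∈ uD, (1 - ‖z‖^2)^β * ‖deriv (deriv g) z‖ ≤ C := by
    intro z hz
    have h := hkey _ (const_memZ α) z hz
    rw [const_zNorm, mul_one] at h
    refine le_trans (le_of_eq ?_) h
    unfold zygS
    rw [T_deriv2 hφ hφm hg analyticOn_const hz, deriv_const, zero_mul, zero_mul,
      zero_add, one_mul]
  -- bound for g'φ' from the identity test function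
  have hN1 : ∀ z ∈ uD, (1 - ‖z‖^2)^β * ‖deriv g z * deriv φ z‖ ≤ 2*C := by
    intro z hz
    have h := hkey _ (id_memZ α) z hz
    rw [id_zNorm, mul_one] at h
    have hbp : (0:ℝ) ≤ (1 - ‖z‖^2) ^ β := Real.rpow_nonneg (one_sub_sq_pos hz).le _
    have hform : zygS β (UgCphi g φ (fun w => w)) z
        = (1 - ‖z‖^2)^β * ‖deriv φ z * deriv g z + φ z * deriv (deriv g) z‖ := by
      unfold zygS
      rw [T_deriv2 hφ hφm hg (analyticOnNhd_id.analyticOn) hz]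
      simp only [deriv_id'', one_mul]
    rw [hform] at h
    have hterm : (1 - ‖z‖^2)^β * ‖φ z * deriv (deriv g) z‖ ≤ C := by
      rw [norm_mul]
      have hφ1 : ‖φ z‖ ≤ 1 := (mem_uD.mp (hφm hz)).le
      calc (1 - ‖z‖^2)^β * (‖φ z‖ * ‖deriv (deriv g) z‖)
          = ‖φ z‖ * ((1 - ‖z‖^2)^β * ‖deriv (deriv g) z‖) := by ring
      _ ≤ 1 * C := mul_le_mul hφ1 (hN2 z hz) (mul_nonneg hbp (norm_nonneg _)) zero_le_one
      _ = C := one_mul C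
    have hsplit : ‖deriv g z * deriv φ z‖
        ≤ ‖deriv φ z * deriv g z + φ z * deriv (deriv g) z‖ + ‖φ z * deriv (deriv g) z‖ := by
      have e : deriv g z * deriv φ z
          = (deriv φ z * deriv g z + φ z * deriv (deriv g) z) - φ z * deriv (deriv g) z := by
        ring
      rw [e]
      exact norm_sub_le _ _
    calc (1 - ‖z‖^2)^β * ‖deriv g z * deriv φ z‖
        ≤ (1 - ‖z‖^2)^β * (‖deriv φ z * deriv g z + φ z * deriv (deriv g) z‖
          + ‖φ z * deriv (deriv g) z‖) := mul_le_mul_of_nonneg_left hsplit hbp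
    _ = (1 - ‖z‖^2)^β * ‖deriv φ z * deriv g z + φ z * deriv (deriv g) z‖
          + (1 - ‖z‖^2)^β * ‖φ z * deriv (deriv g) z‖ := by ring
    _ ≤ C + C := add_le_add h hterm
    _ = 2*C := by ring
  constructor
  · -- first condition
    refine ⟨max ((2*C) / ((3:ℝ)/4)^(α-1)) (2*(C * (3*2*KK α))), fun z hz => ?_⟩
    have ha : φ z ∈ uD := hφm hz
    have hx : 0 < 1 - ‖φ z‖^2 := one_sub_sq_pos ha
    have hbp : (0:ℝ) ≤ (1 - ‖z‖^2) ^ β := Real.rpow_nonneg (one_sub_sq_pos hz).le _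
    by_cases hsmall : ‖φ z‖ ≤ 1/2
    · refine le_trans ?_ (le_max_left _ _)
      have hxge : ((3:ℝ)/4)^(α-1) ≤ (1-‖φ z‖^2)^(α-1) :=
        Real.rpow_le_rpow (by norm_num) (by nlinarith [norm_nonneg (φ z)]) (by linarith)
      exact div_le_div₀ (by linarith) (hN1 z hz)
        (Real.rpow_pos_of_pos (by norm_num) _) hxge
    · refine le_trans ?_ (le_max_right _ _)
      push_neg at hsmall
      have hmem := comb_memZ α 1 (-1) hα ha
      have h := hkey _ hmem z hz
      have hnorm := comb_zNorm α 1 (-1) hα ha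
      rw [norm_one, norm_neg, norm_one] at hnorm
      have hval : comb α 1 (-1) (φ z) (φ z) = 0 := by
        rw [comb_val α 1 (-1) ha]
        ring
      have hd1 : deriv (comb α 1 (-1) (φ z)) (φ z)
          = -(((starRingEnd ℂ) (φ z)) * (((1-‖φ z‖^2) ^ (1-α) : ℝ) : ℂ)) := by
        rw [comb_d1_val α 1 (-1) ha]
        push_cast
        ring
      have hform : zygS β (UgCphi g φ (comb α 1 (-1) (φ z))) z
          = (1-‖z‖^2)^β * (‖φ z‖ * (1-‖φ z‖^2)^(1-α) * ‖deriv g z * deriv φ z‖) := by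
        unfold zygS
        rw [T_deriv2 hφ hφm hg hmem.1 hz, hval, hd1, zero_mul, add_zero]
        congr 1
        rw [norm_mul, norm_mul, norm_neg, norm_mul, RCLike.norm_conj, Complex.norm_real,
          Real.norm_eq_abs, abs_of_nonneg (Real.rpow_nonneg hx.le _), norm_mul]
        ring
      rw [hform] at h
      have hCz : C * zNorm α (comb α 1 (-1) (φ z)) ≤ C * (3*2*KK α) := by
        apply mul_le_mul_of_nonneg_left _ hC0.le
        refine le_trans hnorm (le_of_eq (by ring))
      have hAx : (1-‖z‖^2)^β * ‖deriv g z * deriv φ z‖ / (1-‖φ z‖^2)^(α-1)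
          = (1-‖z‖^2)^β * ‖deriv g z * deriv φ z‖ * (1-‖φ z‖^2)^(1-α) := by
        rw [div_eq_mul_inv, ← Real.rpow_neg hx.le]
        congr 1
        ring
      rw [hAx]
      have hAnn : (0:ℝ) ≤ (1-‖z‖^2)^β * ‖deriv g z * deriv φ z‖ * (1-‖φ z‖^2)^(1-α) :=
        mul_nonneg (mul_nonneg hbp (norm_nonneg _)) (Real.rpow_nonneg hx.le _)
      have heq : (1-‖z‖^2)^β * (‖φ z‖ * (1-‖φ z‖^2)^(1-α) * ‖deriv g z * deriv φ z‖)
          = ‖φ z‖ * ((1-‖z‖^2)^β * ‖deriv g z * deriv φ z‖ * (1-‖φ z‖^2)^(1-α)) := by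
        ring
      rw [heq] at h
      nlinarith [le_trans h hCz]
  · -- second condition
    refine ⟨C * (3*(2*α-1)*KK α), fun z hz => ?_⟩
    have ha : φ z ∈ uD := hφm hz
    have hx : 0 < 1 - ‖φ z‖^2 := one_sub_sq_pos ha
    have hbp : (0:ℝ) ≤ (1 - ‖z‖^2) ^ β := Real.rpow_nonneg (one_sub_sq_pos hz).le _
    set μ : ℂ := ((α : ℝ) : ℂ) with hμdef
    set ν : ℂ := -(((α-1 : ℝ)) : ℂ) with hνdef
    have hmem := comb_memZ α μ ν hα ha
    have h := hkey _ hmem z hz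
    have hnorm := comb_zNorm α μ ν hα ha
    have hμn : ‖μ‖ = α := by
      rw [hμdef, Complex.norm_real, Real.norm_eq_abs, abs_of_pos (by linarith)]
    have hνn : ‖ν‖ = α - 1 := by
      rw [hνdef, norm_neg, Complex.norm_real, Real.norm_eq_abs, abs_of_pos (by linarith)]
    rw [hμn, hνn] at hnorm
    have hval : comb α μ ν (φ z) (φ z) = (((1-‖φ z‖^2) ^ (2-α) : ℝ) : ℂ) := by
      rw [comb_val α μ ν ha]
      have e : μ + ν = 1 := by
        rw [hμdef, hνdef]
        push_cast
        ring
      rw [e, one_mul]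
    have hd1 : deriv (comb α μ ν (φ z)) (φ z) = 0 := by
      rw [comb_d1_val α μ ν ha]
      have e : μ * ((α-1 : ℝ) : ℂ) + ν * ((α : ℝ) : ℂ) = 0 := by
        rw [hμdef, hνdef]
        push_cast
        ring
      rw [e, zero_mul, zero_mul]
    have hform : zygS β (UgCphi g φ (comb α μ ν (φ z))) z
        = (1-‖z‖^2)^β * ((1-‖φ z‖^2)^(2-α) * ‖deriv (deriv g) z‖) := by
      unfold zygS
      rw [T_deriv2 hφ hφm hg hmem.1 hz, hval, hd1, zero_mul, zero_mul, zero_add]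
      congr 1
      rw [norm_mul, Complex.norm_real, Real.norm_eq_abs,
        abs_of_nonneg (Real.rpow_nonneg hx.le _)]
    rw [hform] at h
    have hCz : C * zNorm α (comb α μ ν (φ z)) ≤ C * (3*(2*α-1)*KK α) := by
      apply mul_le_mul_of_nonneg_left _ hC0.le
      refine le_trans hnorm (le_of_eq (by ring))
    rw [div_rpow_le_iff hx]
    have hxx : (1-‖φ z‖^2)^(2-α) * (1-‖φ z‖^2)^(α-2) = 1 := by
      rw [← Real.rpow_add hx]
      norm_num
    calc (1 - ‖z‖ ^ 2) ^ β * ‖deriv (deriv g) z‖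
        = ((1-‖z‖^2)^β * ((1-‖φ z‖^2)^(2-α) * ‖deriv (deriv g) z‖)) * (1-‖φ z‖^2)^(α-2) := by
          rw [show ((1-‖z‖^2)^β * ((1-‖φ z‖^2)^(2-α) * ‖deriv (deriv g) z‖)) * (1-‖φ z‖^2)^(α-2)
            = ((1-‖z‖^2)^β * ‖deriv (deriv g) z‖) * ((1-‖φ z‖^2)^(2-α) * (1-‖φ z‖^2)^(α-2))
            from by ring, hxx, mul_one]
    _ ≤ (C * (3*(2*α-1)*KK α)) * (1-‖φ z‖^2)^(α-2) :=
          mul_le_mul_of_nonneg_right (le_trans h hCz) (Real.rpow_nonneg hx.le _)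
    _ = C * (3*(2*α-1)*KK α) * (1-‖φ z‖^2)^(α-2) := by ring

theorem stmt_15 (α β : ℝ) (hα : 2 < α) (hβ : 0 < β)
    (φ g : ℂ → ℂ) (hφ : AnalyticOn ℂ φ uD) (hφm : Set.MapsTo φ uD uD)
    (hg : AnalyticOn ℂ g uD) :
    boundedOp α β (UgCphi g φ) ↔
      ((∃ M : ℝ, ∀ z ∈ uD, (1 - ‖z‖ ^ 2) ^ β * ‖deriv g z * deriv φ z‖ / (1 - ‖φ z‖ ^ 2) ^ (α - 1) ≤ M) ∧ (∃ M : ℝ, ∀ z ∈ uD, (1 - ‖z‖ ^ 2) ^ β * ‖deriv (deriv g) z‖ / (1 - ‖φ z‖ ^ 2) ^ (α - 2) ≤ M)) := by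
  constructor
  · exact forward_dir α β hα hβ φ g hφ hφm hg
  · intro h
    exact backward_dir α β hα hβ φ g hφ hφm hg h.1 h.2
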